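/- Let f = e^ψ be a continuous positive density on ℝ with ψ convex (f is log-convex), and suppose there is an end E ∈ {−∞, +∞} such that f is integrable on a neighborhood of E. Then for every V > 0 the half-line of weighted volume V containing E (an interval (−∞, x) if E = −∞, or (x, +∞) if E = +∞) is the unique isoperimetric region of volume V. -/

import Mathlib

open Filter MeasureTheory Set

/-- Weighted volume of a set `Ω ⊆ ℝ` with respect to the density `f`. -/
noncomputable def wvol (f : ℝ → ℝ) (Ω : Set ℝ) : ENNReal :=
  ∫⁻ x in Ω, ENNReal.ofReal (f x)

/-- Weighted perimeter of a set `Ω ⊆ ℝ`: the sum of `f` over the topological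
boundary of `Ω`. -/
noncomputable def wper (f : ℝ → ℝ) (Ω : Set ℝ) : ENNReal :=
  ∑' x : frontier Ω, ENNReal.ofReal (f x)

/-- `Ω` is an isoperimetric region (minimizer) of weighted volume `V` on the line. -/
def IsIsopRegion (f : ℝ → ℝ) (Ω : Set ℝ) (V : ENNReal) : Prop :=
  IsOpen Ω ∧ wvol f Ω = V ∧
    ∀ U : Set ℝ, IsOpen U → wvol f U = V → wper f Ω ≤ wper f U

/-- A positive convex function that is integrable near `-∞` is strictly increasing. -/
lemma strictMono_of_convex_integrable (f : ℝ → ℝ) (hpos : ∀ x, 0 < f x)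
    (hconv : ConvexOn ℝ Set.univ f) (hint : IntegrableOn f (Set.Iic 0)) :
    StrictMono f := by
  intro a b hab
  by_contra hle
  push_neg at hle
  have key : ∀ t < a, f b ≤ f t := by
    intro t ht
    have hbt : 0 < b - t := by linarith
    set lam := (b - a) / (b - t) with hlamdef
    set mu := (a - t) / (b - t) with hmudef
    have hlam : 0 < lam := div_pos (by linarith) hbt
    have hmu : 0 ≤ mu := div_nonneg (by linarith) hbt.le
    have hsum : lam + mu = 1 := by
      rw [hlamdef, hmudef, ← add_div, div_eq_one_iff_eq hbt.ne']; ring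
    have hcomb : lam • t + mu • b = a := by
      rw [smul_eq_mul, smul_eq_mul, hlamdef, hmudef]; field_simp; ring
    have h2 := hconv.2 (mem_univ t) (mem_univ b) hlam.le hmu hsum
    rw [hcomb] at h2
    simp only [smul_eq_mul] at h2
    nlinarith [h2, hle, hpos b]
  set c := min a 0 with hc
  have hsub : Set.Iio c ⊆ Set.Iic 0 := fun t ht =>
    mem_Iic.mpr (le_of_lt (lt_of_lt_of_le ht (min_le_right a 0)))
  have hint' : IntegrableOn f (Set.Iio c) := hint.mono_set hsub
  have hfin := hint'.measure_ge_lt_top (hpos b)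
  have hbig : (volume.restrict (Set.Iio c)) {t | f b ≤ f t} = ⊤ := by
    have h1 : Set.Iio c ⊆ {t | f b ≤ f t} := fun t ht =>
      key t (lt_of_lt_of_le ht (min_le_left _ _))
    have := measure_mono (μ := volume.restrict (Set.Iio c)) h1
    rw [Measure.restrict_apply_self, Real.volume_Iio] at this
    exact top_le_iff.mp this
  rw [hbig] at hfin
  exact absurd hfin (lt_irrefl _)

lemma core_lemma (f : ℝ → ℝ) (hpos : ∀ x, 0 < f x) (hconv : ConvexOn ℝ Set.univ f)
    (hint : IntegrableOn f (Set.Iic 0)) (V : ℝ) (hV : 0 < V) :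
    ∃ x : ℝ, wvol f (Set.Iio x) = ENNReal.ofReal V ∧
      IsIsopRegion f (Set.Iio x) (ENNReal.ofReal V) ∧
      ∀ Ω : Set ℝ, IsIsopRegion f Ω (ENNReal.ofReal V) → Ω = Set.Iio x := by
  classical
  have hmono : StrictMono f := strictMono_of_convex_integrable f hpos hconv hint
  have hmeas : Measurable fun t => ENNReal.ofReal (f t) :=
    ENNReal.measurable_ofReal.comp hmono.monotone.measurable
  set μ : Measure ℝ := volume.withDensity (fun t => ENNReal.ofReal (f t)) with hμdef
  have hwv : ∀ s : Set ℝ, MeasurableSet s → wvol f s = μ s := fun s hs =>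
    (withDensity_apply _ hs).symm
  have hμac : μ ≪ volume := withDensity_absolutelyContinuous _ _
  have hsingle : ∀ x : ℝ, μ {x} = 0 := fun x => hμac (Real.volume_singleton)
  have hIic : μ (Set.Iic 0) < ⊤ := by
    rw [hμdef, withDensity_apply _ measurableSet_Iic]
    exact hint.lintegral_lt_top
  have hIcc : ∀ M : ℝ, μ (Set.Icc 0 M) < ⊤ := by
    intro M
    rw [hμdef, withDensity_apply _ measurableSet_Icc]
    calc ∫⁻ t in Set.Icc 0 M, ENNReal.ofReal (f t)
        ≤ ∫⁻ _ in Set.Icc 0 M, ENNReal.ofReal (f M) :=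
          setLIntegral_mono measurable_const
            (fun t ht => ENNReal.ofReal_le_ofReal (hmono.monotone ht.2))
      _ = ENNReal.ofReal (f M) * volume (Set.Icc 0 M) := setLIntegral_const _ _
      _ < ⊤ := ENNReal.mul_lt_top ENNReal.ofReal_lt_top
          (by rw [Real.volume_Icc]; exact ENNReal.ofReal_lt_top)
  have hfin : ∀ b : ℝ, μ (Set.Iio b) < ⊤ := by
    intro b
    have hsub : Set.Iio b ⊆ Set.Iic 0 ∪ Set.Icc 0 (max 0 b) := by
      intro t ht
      rcases le_or_gt t 0 with h | h
      · exact Or.inl h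
      · exact Or.inr ⟨h.le, le_trans ht.le (le_max_right _ _)⟩
    calc μ (Set.Iio b) ≤ μ (Set.Iic 0 ∪ Set.Icc 0 (max 0 b)) := measure_mono hsub
      _ ≤ μ (Set.Iic 0) + μ (Set.Icc 0 (max 0 b)) := measure_union_le _ _
      _ < ⊤ := ENNReal.add_lt_top.mpr ⟨hIic, hIcc _⟩
  have hIoi : ∀ x : ℝ, μ (Set.Ioi x) = ⊤ := by
    intro x
    rw [hμdef, withDensity_apply _ measurableSet_Ioi]
    refine top_le_iff.mp ?_
    calc (⊤ : ENNReal) = ENNReal.ofReal (f x) * volume (Set.Ioi x) := by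
          rw [Real.volume_Ioi, ENNReal.mul_top]
          exact (ENNReal.ofReal_pos.mpr (hpos x)).ne'
      _ = ∫⁻ _ in Set.Ioi x, ENNReal.ofReal (f x) := (setLIntegral_const _ _).symm
      _ ≤ ∫⁻ t in Set.Ioi x, ENNReal.ofReal (f t) :=
          setLIntegral_mono hmeas (fun t ht => ENNReal.ofReal_le_ofReal (hmono ht).le)
  have hIci : ∀ x : ℝ, μ (Set.Ici x) = ⊤ := fun x =>
    top_le_iff.mp ((hIoi x) ▸ measure_mono Ioi_subset_Ici_self)
  -- positivity of μ on left-neighborhoods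
  have hposIoo : ∀ a b : ℝ, a < b → 0 < μ (Set.Ioo a b) := by
    intro a b hab
    rw [hμdef, withDensity_apply _ measurableSet_Ioo]
    calc (0 : ENNReal) < ENNReal.ofReal (f a) * volume (Set.Ioo a b) := by
          refine ENNReal.mul_pos (ENNReal.ofReal_pos.mpr (hpos a)).ne' ?_
          rw [Real.volume_Ioo]
          exact (ENNReal.ofReal_pos.mpr (by linarith)).ne'
      _ = ∫⁻ _ in Set.Ioo a b, ENNReal.ofReal (f a) := (setLIntegral_const _ _).symm
      _ ≤ ∫⁻ t in Set.Ioo a b, ENNReal.ofReal (f t) :=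
          setLIntegral_mono hmeas (fun t ht => ENNReal.ofReal_le_ofReal (hmono ht.1).le)
  -- existence of the half-line of volume V
  set S : Set ℝ := {t : ℝ | μ (Set.Iio t) ≤ ENNReal.ofReal V} with hSdef
  have hSne : S.Nonempty := by
    have htend : Tendsto (fun n : ℕ => μ (Set.Iio (-(n : ℝ)))) atTop (nhds 0) := by
      have h0 : (⋂ n : ℕ, Set.Iio (-(n : ℝ))) = ∅ := by
        ext y; simp only [mem_iInter, mem_Iio, mem_empty_iff_false, iff_false, not_forall, not_lt]
        obtain ⟨n, hn⟩ := exists_nat_gt (-y)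
        exact ⟨n, by linarith⟩
      have := tendsto_measure_iInter_atTop (μ := μ) (s := fun n : ℕ => Set.Iio (-(n : ℝ)))
        (fun n => measurableSet_Iio.nullMeasurableSet)
        (fun m n hmn => Iio_subset_Iio (by simp; exact_mod_cast hmn))
        ⟨0, (hfin _).ne⟩
      rwa [h0, measure_empty] at this
    have hev := htend.eventually_lt_const (ENNReal.ofReal_pos.mpr hV)
    obtain ⟨n, hn⟩ := hev.exists
    exact ⟨-(n : ℝ), hn.le⟩
  have hSbdd : BddAbove S := by
    set b := (V + 1) / f 0 with hb
    refine ⟨max 0 b, fun t ht => ?_⟩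
    by_contra hlt
    push_neg at hlt
    have hVlt : ENNReal.ofReal V < μ (Set.Iio t) := by
      have h1 : Set.Ioo 0 t ⊆ Set.Iio t := fun y hy => hy.2
      have hb0 : 0 < b := div_pos (by linarith) (hpos 0)
      have hbt : b < t := lt_of_le_of_lt (le_max_right 0 b) hlt
      have h0t : (0:ℝ) < t := lt_of_le_of_lt (le_max_left 0 b) hlt
      calc ENNReal.ofReal V < ENNReal.ofReal (f 0 * b) := by
            rw [hb, mul_div_cancel₀ _ (hpos 0).ne']
            exact ENNReal.ofReal_lt_ofReal_iff (by linarith) |>.mpr (by linarith)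
        _ = ENNReal.ofReal (f 0) * ENNReal.ofReal b := ENNReal.ofReal_mul (hpos 0).le
        _ ≤ ENNReal.ofReal (f 0) * volume (Set.Ioo 0 t) := by
            rw [Real.volume_Ioo]
            exact mul_le_mul_right (ENNReal.ofReal_le_ofReal (by linarith)) _
        _ = ∫⁻ _ in Set.Ioo 0 t, ENNReal.ofReal (f 0) := (setLIntegral_const _ _).symm
        _ ≤ ∫⁻ y in Set.Ioo 0 t, ENNReal.ofReal (f y) :=
            setLIntegral_mono hmeas (fun y hy => ENNReal.ofReal_le_ofReal (hmono hy.1).le)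
        _ = μ (Set.Ioo 0 t) := (withDensity_apply _ measurableSet_Ioo).symm
        _ ≤ μ (Set.Iio t) := measure_mono h1
    exact absurd ht (not_le.mpr hVlt)
  set x₀ := sSup S with hx₀def
  have hx₀le : μ (Set.Iio x₀) ≤ ENNReal.ofReal V := by
    have hU : (⋃ n : ℕ, Set.Iio (x₀ - 1 / ((n : ℝ) + 1))) = Set.Iio x₀ := by
      ext y
      simp only [mem_iUnion, mem_Iio]
      constructor
      · rintro ⟨n, hn⟩
        have : (0:ℝ) < 1 / ((n : ℝ) + 1) := by positivity
        linarith
      · intro hy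
        obtain ⟨n, hn⟩ := exists_nat_one_div_lt (show (0:ℝ) < x₀ - y by linarith)
        exact ⟨n, by linarith⟩
    have htend := tendsto_measure_iUnion_atTop (μ := μ)
      (s := fun n : ℕ => Set.Iio (x₀ - 1 / ((n : ℝ) + 1)))
      (fun m n hmn => Iio_subset_Iio (by
        have : 1 / ((n:ℝ) + 1) ≤ 1 / ((m:ℝ) + 1) := by
          apply one_div_le_one_div_of_le (by positivity)
          exact_mod_cast by exact_mod_cast add_le_add_left (Nat.cast_le.mpr hmn) 1
        linarith))
    rw [hU] at htend
    refine le_of_tendsto htend (Eventually.of_forall fun n => ?_)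
    have hlt : x₀ - 1 / ((n : ℝ) + 1) < x₀ := by
      have : (0:ℝ) < 1 / ((n : ℝ) + 1) := by positivity
      linarith
    obtain ⟨t, htS, hlt'⟩ := exists_lt_of_lt_csSup hSne hlt
    exact le_trans (measure_mono (Iio_subset_Iio hlt'.le)) htS
  have hx₀ge : ENNReal.ofReal V ≤ μ (Set.Iio x₀) := by
    have hI : (⋂ n : ℕ, Set.Iio (x₀ + 1 / ((n : ℝ) + 1))) = Set.Iic x₀ := by
      ext y
      simp only [mem_iInter, mem_Iio, mem_Iic]
      constructor
      · intro h
        by_contra hy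
        push_neg at hy
        obtain ⟨n, hn⟩ := exists_nat_one_div_lt (show (0:ℝ) < y - x₀ by linarith)
        exact absurd (h n) (by linarith)
      · intro h n
        have : (0:ℝ) < 1 / ((n : ℝ) + 1) := by positivity
        linarith
    have htend := tendsto_measure_iInter_atTop (μ := μ)
      (s := fun n : ℕ => Set.Iio (x₀ + 1 / ((n : ℝ) + 1)))
      (fun n => measurableSet_Iio.nullMeasurableSet)
      (fun m n hmn => Iio_subset_Iio (by
        have : 1 / ((n:ℝ) + 1) ≤ 1 / ((m:ℝ) + 1) := by
          apply one_div_le_one_div_of_le (by positivity)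
          exact_mod_cast add_le_add_left (Nat.cast_le.mpr hmn) 1
        linarith))
      ⟨0, (hfin _).ne⟩
    rw [hI] at htend
    have hge : ENNReal.ofReal V ≤ μ (Set.Iic x₀) := by
      refine ge_of_tendsto htend (Eventually.of_forall fun n => ?_)
      have hgt : x₀ < x₀ + 1 / ((n : ℝ) + 1) := by
        have : (0:ℝ) < 1 / ((n : ℝ) + 1) := by positivity
        linarith
      have hnotS : x₀ + 1 / ((n : ℝ) + 1) ∉ S := fun hmem =>
        absurd (le_csSup hSbdd hmem) (not_le.mpr hgt)
      exact (not_le.mp hnotS).le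
    calc ENNReal.ofReal V ≤ μ (Set.Iic x₀) := hge
      _ ≤ μ (Set.Iio x₀) + μ {x₀} := by
          rw [← Iio_union_right]; exact measure_union_le _ _
      _ = μ (Set.Iio x₀) := by rw [hsingle, add_zero]
  have hx₀ : μ (Set.Iio x₀) = ENNReal.ofReal V := le_antisymm hx₀le hx₀ge
  -- Claim A: every open set of volume V has a frontier point ≥ x₀
  have claimA : ∀ U : Set ℝ, IsOpen U → μ U = ENNReal.ofReal V →
      ∃ y ∈ frontier U, x₀ ≤ y := by
    intro U hUo hUv
    by_contra h
    push_neg at h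
    have hdisj : Disjoint U (closure U)ᶜ :=
      disjoint_compl_right.mono_left subset_closure
    have hsub : Set.Ici x₀ ⊆ U ∪ (closure U)ᶜ := by
      intro t ht
      by_contra hc
      simp only [mem_union, mem_compl_iff, not_or, not_not] at hc
      have htf : t ∈ frontier U := by
        rw [frontier, hUo.interior_eq]
        exact ⟨hc.2, hc.1⟩
      exact absurd ht (not_le.mpr (h t htf))
    rcases isPreconnected_Ici.subset_or_subset hUo isClosed_closure.isOpen_compl hdisj hsub
      with h1 | h2
    · have : (⊤ : ENNReal) ≤ μ U := (hIci x₀) ▸ measure_mono h1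
      rw [hUv] at this
      exact absurd this (not_le.mpr ENNReal.ofReal_lt_top)
    · have hxnc : x₀ ∉ closure U := h2 self_mem_Ici
      have hUsub : U ⊆ Set.Iio x₀ := by
        intro t htU
        by_contra h'
        exact h2 (mem_Ici.mpr (not_lt.mp h')) (subset_closure htU)
      have hdiff : μ (Set.Iio x₀ \ U) = 0 := by
        rw [measure_diff hUsub hUo.measurableSet.nullMeasurableSet
          (by rw [hUv]; exact ENNReal.ofReal_ne_top), hUv, hx₀, tsub_self]
      refine hxnc ?_
      rw [mem_closure_iff]
      intro o ho hxo
      obtain ⟨ε, hε, hball⟩ := Metric.isOpen_iff.mp ho x₀ hxo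
      have hIoo : Set.Ioo (x₀ - ε) x₀ ⊆ o := fun t ht => by
        apply hball
        rw [Real.ball_eq_Ioo]
        exact ⟨ht.1, ht.2.trans (by linarith)⟩
      by_contra hemp
      have hdsub : Set.Ioo (x₀ - ε) x₀ ⊆ Set.Iio x₀ \ U := by
        intro t ht
        refine ⟨ht.2, fun htU => hemp ⟨t, hIoo ht, htU⟩⟩
      have := le_trans (measure_mono hdsub) hdiff.le
      exact (hposIoo (x₀ - ε) x₀ (by linarith)).ne' (le_antisymm this zero_le)
  -- perimeter of half-lines
  have hperIio : ∀ z : ℝ, wper f (Set.Iio z) = ENNReal.ofReal (f z) := by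
    intro z
    unfold wper
    rw [frontier_Iio]
    exact tsum_singleton z (fun t => ENNReal.ofReal (f t))
  have hlow : ∀ (U : Set ℝ) (y : ℝ), y ∈ frontier U →
      ENNReal.ofReal (f y) ≤ wper f U := by
    intro U y hy
    exact ENNReal.le_tsum (⟨y, hy⟩ : frontier U)
  have hvol : wvol f (Set.Iio x₀) = ENNReal.ofReal V := by
    rw [hwv _ measurableSet_Iio]; exact hx₀
  have hreg : IsIsopRegion f (Set.Iio x₀) (ENNReal.ofReal V) := by
    refine ⟨isOpen_Iio, hvol, fun U hUo hUv => ?_⟩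
    obtain ⟨y, hyf, hyx⟩ := claimA U hUo (by rw [← hwv _ hUo.measurableSet]; exact hUv)
    rw [hperIio]
    exact le_trans (ENNReal.ofReal_le_ofReal (hmono.monotone hyx)) (hlow U y hyf)
  refine ⟨x₀, hvol, hreg, ?_⟩
  -- uniqueness
  rintro Ω ⟨hΩo, hΩv, hΩmin⟩
  have hμΩ : μ Ω = ENNReal.ofReal V := by rw [← hwv _ hΩo.measurableSet]; exact hΩv
  have hper_le : wper f Ω ≤ ENNReal.ofReal (f x₀) := by
    have := hΩmin (Set.Iio x₀) isOpen_Iio hvol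
    rwa [hperIio] at this
  obtain ⟨y, hyf, hyx⟩ := claimA Ω hΩo hμΩ
  have hyle : ENNReal.ofReal (f y) ≤ ENNReal.ofReal (f x₀) :=
    le_trans (hlow Ω y hyf) hper_le
  have hyx' : y ≤ x₀ := by
    by_contra h'
    push_neg at h'
    have : f x₀ < f y := hmono h'
    exact absurd hyle (not_le.mpr ((ENNReal.ofReal_lt_ofReal_iff (hpos y)).mpr this))
  have hyeq : y = x₀ := le_antisymm hyx' hyx
  rw [hyeq] at hyf
  -- frontier Ω = {x₀}
  have hfr : frontier Ω = {x₀} := by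
    ext z
    simp only [mem_singleton_iff]
    constructor
    · intro hz
      by_contra hne
      have hzy : (⟨z, hz⟩ : frontier Ω) ≠ ⟨x₀, hyf⟩ := by
        simp only [ne_eq, Subtype.mk.injEq]; exact hne
      have hsum : ENNReal.ofReal (f z) + ENNReal.ofReal (f x₀) ≤ wper f Ω := by
        have := ENNReal.sum_le_tsum (f := fun t : frontier Ω => ENNReal.ofReal (f t))
          ({⟨z, hz⟩, ⟨x₀, hyf⟩} : Finset (frontier Ω))
        rwa [Finset.sum_pair hzy] at this
      have hlt : ENNReal.ofReal (f x₀) < ENNReal.ofReal (f z) + ENNReal.ofReal (f x₀) := by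
        rw [add_comm]
        exact ENNReal.lt_add_right ENNReal.ofReal_ne_top
          (ENNReal.ofReal_pos.mpr (hpos z)).ne'
      exact absurd (le_trans hsum hper_le) (not_le.mpr hlt)
    · intro hz; rw [hz]; exact hyf
  -- classification
  have hyΩ : x₀ ∉ Ω := by
    have := hyf
    rw [frontier, hΩo.interior_eq] at this
    exact this.2
  have hdisj : Disjoint Ω (closure Ω)ᶜ := disjoint_compl_right.mono_left subset_closure
  have hcover : ∀ s : Set ℝ, x₀ ∉ s → s ⊆ Ω ∪ (closure Ω)ᶜ := by
    intro s hs t ht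
    by_contra hc
    simp only [mem_union, mem_compl_iff, not_or, not_not] at hc
    have htf : t ∈ frontier Ω := by rw [frontier, hΩo.interior_eq]; exact ⟨hc.2, hc.1⟩
    rw [hfr, mem_singleton_iff] at htf
    exact hs (htf ▸ ht)
  have hIoicover : Set.Ioi x₀ ⊆ Ω ∪ (closure Ω)ᶜ := hcover _ (by simp)
  have hIiocover : Set.Iio x₀ ⊆ Ω ∪ (closure Ω)ᶜ := hcover _ (by simp)
  have hIoiExt : Set.Ioi x₀ ⊆ (closure Ω)ᶜ := by
    rcases isPreconnected_Ioi.subset_or_subset hΩo isClosed_closure.isOpen_compl hdisj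
      hIoicover with h1 | h2
    · exfalso
      have : (⊤ : ENNReal) ≤ μ Ω := (hIoi x₀) ▸ measure_mono h1
      rw [hμΩ] at this
      exact absurd this (not_le.mpr ENNReal.ofReal_lt_top)
    · exact h2
  have hIioΩ : Set.Iio x₀ ⊆ Ω := by
    rcases isPreconnected_Iio.subset_or_subset hΩo isClosed_closure.isOpen_compl hdisj
      hIiocover with h1 | h2
    · exact h1
    · exfalso
      have hΩempty : Ω = ∅ := by
        ext t
        simp only [mem_empty_iff_false, iff_false]
        intro htΩ
        rcases lt_trichotomy t x₀ with h | h | h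
        · exact h2 h (subset_closure htΩ)
        · exact hyΩ (h ▸ htΩ)
        · exact hIoiExt h (subset_closure htΩ)
      rw [hΩempty, measure_empty] at hμΩ
      exact absurd hμΩ.symm (ENNReal.ofReal_pos.mpr hV).ne'
  have hΩsub : Ω ⊆ Set.Iio x₀ := by
    intro t htΩ
    rcases lt_trichotomy t x₀ with h | h | h
    · exact h
    · exact absurd (h ▸ htΩ) hyΩ
    · exact absurd (subset_closure htΩ) (hIoiExt h)
  exact le_antisymm hΩsub hIioΩ

lemma wvol_comp_neg (f : ℝ → ℝ) (s : Set ℝ) :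
    wvol (fun t => f (-t)) (Neg.neg ⁻¹' s) = wvol f s := by
  unfold wvol
  exact (Measure.measurePreserving_neg volume).setLIntegral_comp_preimage_emb
    measurableEmbedding_neg (fun t => ENNReal.ofReal (f t)) s

lemma tsum_preimage_neg (A : Set ℝ) (g : ℝ → ENNReal) :
    ∑' x : (Neg.neg ⁻¹' A : Set ℝ), g ↑x = ∑' y : A, g (-(y : ℝ)) := by
  let e : (A : Set ℝ) ≃ (Neg.neg ⁻¹' A : Set ℝ) :=
    { toFun := fun y => ⟨-(y : ℝ), by simpa using y.2⟩
      invFun := fun x => ⟨-(x : ℝ), x.2⟩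
      left_inv := fun y => by ext; simp
      right_inv := fun x => by ext; simp }
  exact (Equiv.tsum_eq e (fun x : (Neg.neg ⁻¹' A : Set ℝ) => g ↑x)).symm

lemma frontier_preimage_neg (s : Set ℝ) :
    frontier (Neg.neg ⁻¹' s : Set ℝ) = Neg.neg ⁻¹' frontier s := by
  simpa using ((Homeomorph.neg ℝ).preimage_frontier s).symm

lemma wper_comp_neg (f : ℝ → ℝ) (s : Set ℝ) :
    wper (fun t => f (-t)) (Neg.neg ⁻¹' s) = wper f s := by
  unfold wper
  rw [frontier_preimage_neg]
  rw [tsum_preimage_neg (frontier s) (fun t => ENNReal.ofReal (f (-t)))]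
  simp only [neg_neg]

lemma isop_comp_neg (f : ℝ → ℝ) (s : Set ℝ) (V : ENNReal)
    (h : IsIsopRegion f s V) : IsIsopRegion (fun t => f (-t)) (Neg.neg ⁻¹' s) V := by
  obtain ⟨ho, hv, hm⟩ := h
  refine ⟨ho.preimage continuous_neg, (wvol_comp_neg f s).trans hv, ?_⟩
  intro U hU hUv
  have hU' : Neg.neg ⁻¹' (Neg.neg ⁻¹' U) = U := by ext t; simp
  have h1 : wvol f (Neg.neg ⁻¹' U) = V := by
    rw [← wvol_comp_neg f (Neg.neg ⁻¹' U), hU']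
    exact hUv
  have h2 := hm _ (hU.preimage continuous_neg) h1
  calc wper (fun t => f (-t)) (Neg.neg ⁻¹' s) = wper f s := wper_comp_neg f s
    _ ≤ wper f (Neg.neg ⁻¹' U) := h2
    _ = wper (fun t => f (-t)) U := by rw [← wper_comp_neg f (Neg.neg ⁻¹' U), hU']

theorem halfline_unique_minimizer_logconvex_finite_end
    (ψ f : ℝ → ℝ) (hf : ∀ x : ℝ, f x = Real.exp (ψ x))
    (hconv : ConvexOn ℝ Set.univ ψ)
    (V : ℝ) (hV : 0 < V) :
    (IntegrableOn f (Set.Iic 0) →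
      ∃ x : ℝ, wvol f (Set.Iio x) = ENNReal.ofReal V ∧
        IsIsopRegion f (Set.Iio x) (ENNReal.ofReal V) ∧
        ∀ Ω : Set ℝ, IsIsopRegion f Ω (ENNReal.ofReal V) → Ω = Set.Iio x) ∧
    (IntegrableOn f (Set.Ici 0) →
      ∃ x : ℝ, wvol f (Set.Ioi x) = ENNReal.ofReal V ∧
        IsIsopRegion f (Set.Ioi x) (ENNReal.ofReal V) ∧
        ∀ Ω : Set ℝ, IsIsopRegion f Ω (ENNReal.ofReal V) → Ω = Set.Ioi x) := by
  have hpos : ∀ x, 0 < f x := fun x => by rw [hf x]; exact Real.exp_pos _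
  have hfconv : ConvexOn ℝ Set.univ f := by
    refine ⟨convex_univ, fun x _ y _ a b ha hb hab => ?_⟩
    simp only [smul_eq_mul, hf]
    calc Real.exp (ψ (a * x + b * y)) ≤ Real.exp (a * ψ x + b * ψ y) := by
          apply Real.exp_le_exp.mpr
          have := hconv.2 (mem_univ x) (mem_univ y) ha hb hab
          simpa [smul_eq_mul] using this
      _ ≤ a * Real.exp (ψ x) + b * Real.exp (ψ y) := by
          have := convexOn_exp.2 (mem_univ (ψ x)) (mem_univ (ψ y)) ha hb hab
          simpa [smul_eq_mul] using this
  constructor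
  · intro hint
    exact core_lemma f hpos hfconv hint V hV
  · intro hint
    set g : ℝ → ℝ := fun t => f (-t) with hg
    have hgpos : ∀ x, 0 < g x := fun x => hpos _
    have hgconv : ConvexOn ℝ Set.univ g := by
      refine ⟨convex_univ, fun x _ y _ a b ha hb hab => ?_⟩
      have h2 := hfconv.2 (mem_univ (-x)) (mem_univ (-y)) ha hb hab
      simp only [smul_eq_mul] at h2 ⊢
      have heq : a * -x + b * -y = -(a * x + b * y) := by ring
      rw [heq] at h2
      exact h2
    have hgint : IntegrableOn g (Set.Iic 0) := by
      have hmp : MeasurePreserving (Neg.neg : ℝ → ℝ)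
          (volume.restrict (Neg.neg ⁻¹' (Set.Ici (0:ℝ)))) (volume.restrict (Set.Ici (0:ℝ))) :=
        (Measure.measurePreserving_neg volume).restrict_preimage measurableSet_Ici
      have hpre : Neg.neg ⁻¹' (Set.Ici (0:ℝ)) = Set.Iic 0 := by ext t; simp
      rw [← hpre]
      exact (hmp.integrable_comp_emb measurableEmbedding_neg).mpr hint
    obtain ⟨x₀, hvol, hreg, huniq⟩ := core_lemma g hgpos hgconv hgint V hV
    refine ⟨-x₀, ?_, ?_, ?_⟩
    · have h := wvol_comp_neg f (Set.Ioi (-x₀))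
      have hpre : Neg.neg ⁻¹' (Set.Ioi (-x₀)) = Set.Iio x₀ := by ext t; simp
      rw [hpre] at h
      rw [← h]
      exact hvol
    · have h := isop_comp_neg g (Set.Iio x₀) (ENNReal.ofReal V) hreg
      have h1 : (fun t => g (-t)) = f := by funext t; simp [hg]
      have h2 : Neg.neg ⁻¹' (Set.Iio x₀) = Set.Ioi (-x₀) := by ext t; simp
      rwa [h1, h2] at h
    · intro Ω hΩ
      have h : IsIsopRegion g (Neg.neg ⁻¹' Ω) (ENNReal.ofReal V) :=
        isop_comp_neg f Ω (ENNReal.ofReal V) hΩ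
      have heq := huniq _ h
      have hΩeq : Ω = Neg.neg ⁻¹' (Set.Iio x₀) := by
        rw [← heq]; ext t; simp
      rw [hΩeq]; ext t; simp
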